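/- Let R > 0 and D > 0. For every θ with 0 < θ ≤ π, the point (R·sin θ, R·(1 − cos θ)) lies within distance D of (D, 0) if and only if θ ≤ 2·arctan(D/R). In particular, at the limit angle θ̄ = 2·arctan(D/R) the distance is exactly D: (R·sin θ̄ − D)² + R²·(1 − cos θ̄)² = D². -/

import Mathlib

/-- For 0 < θ ≤ π, the point (R·sin θ, R·(1 − cos θ)) lies within distance D of
(D, 0) iff θ ≤ 2·arctan(D/R); and at θ̄ = 2·arctan(D/R) the distance is exactly D. -/
theorem stmt_4 (R D : ℝ) (hR : 0 < R) (hD : 0 < D) :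
    (∀ θ : ℝ, 0 < θ → θ ≤ Real.pi →
      ((R * Real.sin θ - D) ^ 2 + R ^ 2 * (1 - Real.cos θ) ^ 2 ≤ D ^ 2 ↔
        θ ≤ 2 * Real.arctan (D / R))) ∧
    (R * Real.sin (2 * Real.arctan (D / R)) - D) ^ 2 +
        R ^ 2 * (1 - Real.cos (2 * Real.arctan (D / R))) ^ 2 = D ^ 2 := by
  constructor
  · intro θ h0 hp
    have hpyth := Real.sin_sq_add_cos_sq θ
    have key : (R * Real.sin θ - D) ^ 2 + R ^ 2 * (1 - Real.cos θ) ^ 2 ≤ D ^ 2 ↔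
        R * (1 - Real.cos θ) ≤ D * Real.sin θ := by
      constructor <;> intro h <;> nlinarith [h, hpyth]
    rw [key]
    set φ := θ / 2 with hφ
    have hθ : θ = 2 * φ := by rw [hφ]; ring
    have hφ0 : 0 < φ := by positivity
    have hφπ : φ ≤ Real.pi / 2 := by rw [hφ]; linarith
    have hsinφ : 0 < Real.sin φ :=
      Real.sin_pos_of_pos_of_lt_pi hφ0 (by linarith [Real.pi_pos])
    have hcos_id : 1 - Real.cos θ = 2 * Real.sin φ ^ 2 := by
      rw [hθ, Real.cos_two_mul]
      have := Real.sin_sq_add_cos_sq φ; nlinarith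
    have hsin_id : Real.sin θ = 2 * Real.sin φ * Real.cos φ := by
      rw [hθ, Real.sin_two_mul]
    rw [hcos_id, hsin_id]
    have harct : Real.arctan (D / R) < Real.pi / 2 := Real.arctan_lt_pi_div_two _
    have harct0 : 0 < Real.arctan (D / R) := by
      rw [← Real.arctan_zero]; exact Real.arctan_strictMono (div_pos hD hR)
    rcases eq_or_lt_of_le hφπ with hEq | hlt
    · -- φ = π/2 : both sides false
      have hc : Real.cos φ = 0 := by rw [hEq, Real.cos_pi_div_two]
      have hs1 : Real.sin φ = 1 := by rw [hEq, Real.sin_pi_div_two]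
      constructor
      · intro h; exfalso; rw [hc, hs1] at h; nlinarith
      · intro h; exfalso; rw [hθ] at h; linarith
    · have hcosφ : 0 < Real.cos φ :=
        Real.cos_pos_of_mem_Ioo ⟨by linarith [Real.pi_pos], hlt⟩
      have step1 : R * (2 * Real.sin φ ^ 2) ≤ D * (2 * Real.sin φ * Real.cos φ) ↔
          Real.tan φ ≤ D / R := by
        rw [Real.tan_eq_sin_div_cos, div_le_div_iff₀ hcosφ hR]
        constructor <;> intro h <;> nlinarith
      rw [step1, hθ]
      constructor
      · intro h
        have h2 := Real.arctan_strictMono.monotone h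
        rw [Real.arctan_tan (by linarith [Real.pi_pos]) hlt] at h2
        linarith
      · intro h
        have hφle : φ ≤ Real.arctan (D / R) := by linarith
        calc Real.tan φ ≤ Real.tan (Real.arctan (D / R)) := by
              rcases eq_or_lt_of_le hφle with h' | h'
              · rw [h']
              · exact le_of_lt
                  (Real.tan_lt_tan_of_lt_of_lt_pi_div_two (by linarith) harct h')
          _ = D / R := Real.tan_arctan _
  · set t := D / R with ht
    have ht0 : 0 < t := div_pos hD hR
    have hs : Real.sin (Real.arctan t) = t / Real.sqrt (1 + t ^ 2) := Real.sin_arctan t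
    have hc : Real.cos (Real.arctan t) = 1 / Real.sqrt (1 + t ^ 2) := Real.cos_arctan t
    have hsq : Real.sqrt (1 + t ^ 2) ^ 2 = 1 + t ^ 2 := Real.sq_sqrt (by positivity)
    have hpos : 0 < Real.sqrt (1 + t ^ 2) := Real.sqrt_pos.2 (by positivity)
    have hDt : D = R * t := by rw [ht]; field_simp
    rw [Real.sin_two_mul, Real.cos_two_mul, hs, hc, hDt]
    field_simp
    nlinarith [hsq, hpos, sq_nonneg t]
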